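/- Let α > 1 and let A, B, a, b be positive integers such that A ≤ α·B and B ≤ α·A. Then A·c_α·log₂ a + B·c_α·log₂ b + A + B ≤ (A + B)·c_α·log₂(a + b). -/

import Mathlib

open Real

/-- The constant `c_α = (α+1)/((α+1)·log₂(α+1) − α·log₂ α)`. -/
noncomputable def cA (α : ℝ) : ℝ :=
  (α + 1) / ((α + 1) * logb 2 (α + 1) - α * logb 2 α)

lemma one_sub_inv_le_log {u : ℝ} (hu : 0 < u) : 1 - u⁻¹ ≤ Real.log u := by
  have := Real.log_le_sub_one_of_pos (inv_pos.2 hu)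
  rw [Real.log_inv] at this
  linarith

lemma gibbs (x y a b : ℝ) (hx : 0 < x) (hy : 0 < y) (ha : 0 < a) (hb : 0 < b) :
    x * (Real.log (x+y) - Real.log x) + y * (Real.log (x+y) - Real.log y)
      ≤ x * (Real.log (a+b) - Real.log a) + y * (Real.log (a+b) - Real.log b) := by
  have hxy : 0 < x + y := by linarith
  have hab : 0 < a + b := by linarith
  set u := (a+b)*x/(a*(x+y)) with hu
  set v := (a+b)*y/(b*(x+y)) with hv
  have hu0 : 0 < u := by positivity
  have hv0 : 0 < v := by positivity
  have hlu : Real.log u = (Real.log (a+b) - Real.log a) - (Real.log (x+y) - Real.log x) := by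
    rw [hu, Real.log_div (by positivity) (by positivity),
      Real.log_mul hab.ne' hx.ne', Real.log_mul ha.ne' hxy.ne']
    ring
  have hlv : Real.log v = (Real.log (a+b) - Real.log b) - (Real.log (x+y) - Real.log y) := by
    rw [hv, Real.log_div (by positivity) (by positivity),
      Real.log_mul hab.ne' hy.ne', Real.log_mul hb.ne' hxy.ne']
    ring
  have h1 := one_sub_inv_le_log hu0
  have h2 := one_sub_inv_le_log hv0
  have hsum : x*(1 - u⁻¹) + y*(1 - v⁻¹) = 0 := by
    rw [hu, hv]
    field_simp
    ring
  have hge : 0 ≤ x * Real.log u + y * Real.log v := by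
    nlinarith [mul_le_mul_of_nonneg_left h1 hx.le, mul_le_mul_of_nonneg_left h2 hy.le]
  rw [hlu, hlv] at hge
  linarith

lemma binEntropy_div (x y : ℝ) (hx : 0 < x) (hy : 0 < y) :
    Real.binEntropy (x/(x+y)) * (x+y)
      = x*(Real.log (x+y) - Real.log x) + y*(Real.log (x+y) - Real.log y) := by
  have hxy : 0 < x + y := by linarith
  have h1 : 1 - x/(x+y) = y/(x+y) := by field_simp; ring
  rw [Real.binEntropy, h1, inv_div, inv_div, Real.log_div hxy.ne' hx.ne',
    Real.log_div hxy.ne' hy.ne']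
  field_simp

lemma entropy_min (q p : ℝ) (hq : 1/2 ≤ q) (hq1 : q ≤ 1) (h1 : 1 - q ≤ p) (h2 : p ≤ q) :
    Real.binEntropy q ≤ Real.binEntropy p := by
  have hmem : p ∈ segment ℝ (1-q) q := by
    rw [segment_eq_Icc (by linarith)]
    exact ⟨h1, h2⟩
  have h := Real.strictConcave_binEntropy.concaveOn.ge_on_segment
    (x := 1-q) (y := q) (z := p)
    (Set.mem_Icc.2 ⟨by linarith, by linarith⟩) (Set.mem_Icc.2 ⟨by linarith, hq1⟩) hmem
  rwa [Real.binEntropy_one_sub, min_self] at h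

/-- Lemma 5 (for case (A)): if `A ≤ αB` and `B ≤ αA` then
`A·c_α·log a + B·c_α·log b + A + B ≤ (A+B)·c_α·log(a+b)`. -/
theorem alphamerge_A (α : ℝ) (hα : 1 < α) (A B a b : ℕ)
    (hA : 0 < A) (hB : 0 < B) (ha : 0 < a) (hb : 0 < b)
    (h1 : (A : ℝ) ≤ α * B) (h2 : (B : ℝ) ≤ α * A) :
    (A : ℝ) * cA α * logb 2 a + (B : ℝ) * cA α * logb 2 b + A + B
      ≤ ((A : ℝ) + B) * cA α * logb 2 ((a : ℝ) + b) := by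
  have hα0 : (0:ℝ) < α := by linarith
  have hα1 : (0:ℝ) < α + 1 := by linarith
  have hA' : (0:ℝ) < (A:ℝ) := by exact_mod_cast hA
  have hB' : (0:ℝ) < (B:ℝ) := by exact_mod_cast hB
  have ha' : (0:ℝ) < (a:ℝ) := by exact_mod_cast ha
  have hb' : (0:ℝ) < (b:ℝ) := by exact_mod_cast hb
  have hS : (0:ℝ) < (A:ℝ) + B := by linarith
  have hab : (0:ℝ) < (a:ℝ) + b := by linarith
  have hl2 : (0:ℝ) < Real.log 2 := Real.log_pos one_lt_two
  set D := (α+1)*Real.log (α+1) - α*Real.log α with hD_def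
  have hD : 0 < D := by
    have g1 : 0 < Real.log α := Real.log_pos hα
    have g2 : Real.log α < Real.log (α+1) := Real.log_lt_log hα0 (by linarith)
    nlinarith
  -- entropy values
  have hq_val := binEntropy_div α 1 hα0 one_pos
  rw [Real.log_one] at hq_val
  have hp_val := binEntropy_div (A:ℝ) (B:ℝ) hA' hB'
  -- entropy comparison
  have hq_half : 1/2 ≤ α/(α+1) := by
    rw [le_div_iff₀ hα1]; linarith
  have hq1 : α/(α+1) ≤ 1 := by
    rw [div_le_one hα1]; linarith
  have hp1 : 1 - α/(α+1) ≤ (A:ℝ)/((A:ℝ)+B) := by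
    have e : 1 - α/(α+1) = 1/(α+1) := by field_simp; ring
    rw [e, div_le_div_iff₀ hα1 hS]; nlinarith
  have hp2 : (A:ℝ)/((A:ℝ)+B) ≤ α/(α+1) := by
    rw [div_le_div_iff₀ hS hα1]; nlinarith
  have hent : Real.binEntropy (α/(α+1)) ≤ Real.binEntropy ((A:ℝ)/((A:ℝ)+B)) :=
    entropy_min _ _ hq_half hq1 hp1 hp2
  have hgibbs := gibbs (A:ℝ) (B:ℝ) (a:ℝ) (b:ℝ) hA' hB' ha' hb'
  -- key inequality
  have key : ((A:ℝ)+B)*D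
      ≤ (α+1)*((A:ℝ)*(Real.log ((a:ℝ)+b) - Real.log a)
        + B*(Real.log ((a:ℝ)+b) - Real.log b)) := by
    have h3 : Real.binEntropy (α/(α+1)) * (α+1) = D := by
      rw [hq_val, hD_def]; ring
    have step1 : ((A:ℝ)+B)*D = (α+1) * (((A:ℝ)+B) * Real.binEntropy (α/(α+1))) := by
      rw [← h3]; ring
    have step2 : ((A:ℝ)+B) * Real.binEntropy (α/(α+1))
        ≤ ((A:ℝ)+B) * Real.binEntropy ((A:ℝ)/((A:ℝ)+B)) :=
      mul_le_mul_of_nonneg_left hent hS.le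
    have step3 : ((A:ℝ)+B) * Real.binEntropy ((A:ℝ)/((A:ℝ)+B))
        = (A:ℝ)*(Real.log ((A:ℝ)+B) - Real.log A) + B*(Real.log ((A:ℝ)+B) - Real.log B) := by
      rw [← hp_val]; ring
    rw [step1]
    exact mul_le_mul_of_nonneg_left (by linarith) hα1.le
  -- convert the goal
  have hcA : cA α = (α+1) * Real.log 2 / D := by
    rw [cA]
    simp only [Real.logb]
    rw [show (α+1)*(Real.log (α+1)/Real.log 2) - α*(Real.log α/Real.log 2)
        = D / Real.log 2 by rw [hD_def]; ring, div_div_eq_mul_div]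
  rw [hcA]
  simp only [Real.logb]
  rw [← sub_nonneg]
  have expand : ((A:ℝ) + B) * ((α+1) * Real.log 2 / D) * (Real.log ((a:ℝ) + b) / Real.log 2)
      - ((A:ℝ) * ((α+1) * Real.log 2 / D) * (Real.log a / Real.log 2)
        + (B:ℝ) * ((α+1) * Real.log 2 / D) * (Real.log b / Real.log 2) + A + B)
      = ((α+1)*((A:ℝ)*(Real.log ((a:ℝ)+b) - Real.log a)
          + B*(Real.log ((a:ℝ)+b) - Real.log b)) - ((A:ℝ)+B)*D) / D := by
    field_simp
    ring
  rw [expand]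
  exact div_nonneg (by linarith) hD.le
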